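/- Let A be a complex unital Banach algebra, let A₁, …, Aₘ ∈ A, and let t ∈ ℝ. Then the sequence n ↦ ((∏_{j=1}^m exp((t/(2n))·Aⱼ)) · (∏_{j=m}^{1} exp((t/(2n))·Aⱼ)))^n (the second product taken in reverse order) converges, as n → ∞ along the natural numbers, to exp(t·Σ_{j=1}^m Aⱼ). -/

import Mathlib

open NormedSpace Filter

section aux
variable {B : Type*} [NormedRing B] [NormedAlgebra ℂ B] [CompleteSpace B]

lemma auxST_pow_sub_pow (a b : B) (M : ℝ) (ha : ‖a‖ ≤ M) (hb : ‖b‖ ≤ M) :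
    ∀ n : ℕ, ‖a ^ n - b ^ n‖ ≤ n * M ^ (n - 1) * ‖a - b‖ := by
  have hM : 0 ≤ M := le_trans (norm_nonneg a) ha
  intro n
  induction n with
  | zero => simp
  | succ n ih =>
    match n, ih with
    | 0, _ => simp
    | (k+1), ih =>
      have key : a ^ (k + 2) - b ^ (k + 2)
          = a ^ (k + 1) * (a - b) + (a ^ (k + 1) - b ^ (k + 1)) * b := by
        rw [pow_succ a (k+1), pow_succ b (k+1)]
        noncomm_ring
      rw [key]
      have h1 : ‖a ^ (k + 1) * (a - b)‖ ≤ M ^ (k + 1) * ‖a - b‖ := by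
        calc ‖a ^ (k + 1) * (a - b)‖ ≤ ‖a ^ (k + 1)‖ * ‖a - b‖ := norm_mul_le _ _
        _ ≤ M ^ (k + 1) * ‖a - b‖ := by
            gcongr
            exact le_trans (norm_pow_le' a (Nat.succ_pos k)) (pow_le_pow_left₀ (norm_nonneg a) ha _)
      have h2 : ‖(a ^ (k + 1) - b ^ (k + 1)) * b‖ ≤ ((k+1) * M ^ k * ‖a - b‖) * M := by
        calc ‖(a ^ (k + 1) - b ^ (k + 1)) * b‖ ≤ ‖a ^ (k + 1) - b ^ (k + 1)‖ * ‖b‖ :=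
              norm_mul_le _ _
        _ ≤ ((k+1) * M ^ k * ‖a - b‖) * M := by
            exact mul_le_mul (by simpa using ih) hb (norm_nonneg b) (by positivity)
      calc ‖_ + _‖ ≤ ‖a ^ (k + 1) * (a - b)‖ + ‖(a ^ (k + 1) - b ^ (k + 1)) * b‖ := norm_add_le _ _
      _ ≤ M ^ (k + 1) * ‖a - b‖ + ((k+1) * M ^ k * ‖a - b‖) * M := add_le_add h1 h2
      _ ≤ (↑(k + 1 + 1) : ℝ) * M ^ (k + 1 + 1 - 1) * ‖a - b‖ := by
          have e : ((k:ℝ)+1) * M ^ k * ‖a - b‖ * M = ((k:ℝ)+1) * M ^ (k+1) * ‖a - b‖ := by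
            ring
          push_cast
          push_cast at ih ⊢
          linarith

lemma auxST_norm_exp (h1 : ‖(1 : B)‖ ≤ 1) (y : B) : ‖exp y‖ ≤ Real.exp ‖y‖ := by
  simp only [exp_eq_tsum ℂ]
  have hs : Summable (fun n : ℕ => ‖(n.factorial : ℂ)⁻¹ • y ^ n‖) := norm_expSeries_summable' y
  refine le_trans (norm_tsum_le_tsum_norm hs) ?_
  have hExp : Real.exp ‖y‖ = ∑' n : ℕ, ‖y‖ ^ n / (n.factorial : ℝ) := by
    rw [Real.exp_eq_exp_ℝ, exp_eq_tsum_div]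
  rw [hExp]
  refine Summable.tsum_le_tsum ?_ hs (Real.summable_pow_div_factorial ‖y‖)
  intro n
  rw [norm_smul]
  rcases Nat.eq_zero_or_pos n with hn | hn
  · subst hn; simpa using h1
  · have : ‖y ^ n‖ ≤ ‖y‖ ^ n := norm_pow_le' y hn
    have hfac : ‖((n.factorial : ℂ))⁻¹‖ = ((n.factorial : ℝ))⁻¹ := by
      rw [norm_inv]
      norm_num
    rw [hfac, div_eq_inv_mul]
    gcongr

lemma auxST_deriv_seq {g : ℂ → B} {d : B} (hg : HasDerivAt g d 0) (c : ℂ) :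
    Tendsto (fun n : ℕ => (n : ℂ) • (g (c / n) - g 0)) atTop (nhds (c • d)) := by
  rcases eq_or_ne c 0 with rfl | hc
  · simpa using tendsto_const_nhds (α := ℕ) (f := atTop) (a := (0 : B))
  · have hslope := hasDerivAt_iff_tendsto_slope.1 hg
    have hcn : Tendsto (fun n : ℕ => c / n) atTop (nhdsWithin 0 {z : ℂ | z ≠ 0}) := by
      rw [tendsto_nhdsWithin_iff]
      constructor
      · have hinv : Tendsto (fun n : ℕ => ((n : ℂ))⁻¹) atTop (nhds 0) :=
          tendsto_inv_atTop_nhds_zero_nat (𝕜 := ℂ)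
        have := hinv.const_mul c
        simpa [div_eq_mul_inv] using this
      · filter_upwards [eventually_ge_atTop 1] with n hn
        have hn0 : (n : ℂ) ≠ 0 := by
          exact_mod_cast Nat.cast_ne_zero.2 (by omega)
        exact div_ne_zero hc hn0
    have h2 := (hslope.comp hcn).const_smul c
    refine h2.congr' ?_
    filter_upwards [eventually_ge_atTop 1] with n hn
    have hn0 : (n : ℂ) ≠ 0 := Nat.cast_ne_zero.2 (by omega)
    have hcn0 : c / n ≠ 0 := div_ne_zero hc hn0
    show c • slope g 0 (c / n) = (n : ℂ) • (g (c / n) - g 0)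
    rw [slope_def_module]
    rw [sub_zero, smul_smul]
    congr 1
    field_simp

lemma auxST_main (h1 : ‖(1 : B)‖ ≤ 1) {u : ℕ → B} {x : B}
    (h : Tendsto (fun n : ℕ => (n : ℂ) • (u n - 1)) atTop (nhds x)) :
    Tendsto (fun n : ℕ => u n ^ n) atTop (nhds (exp x)) := by
  set b : ℕ → B := fun n => exp (((n : ℂ))⁻¹ • x) with hbdef
  have hbexp : HasDerivAt (fun z : ℂ => exp (z • x)) x 0 := by
    simpa using hasDerivAt_exp_smul_const (𝕂 := ℂ) x 0
  have hbt : Tendsto (fun n : ℕ => (n : ℂ) • (b n - 1)) atTop (nhds x) := by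
    have := auxST_deriv_seq hbexp 1
    simpa [hbdef, one_div] using this
  have hw : Tendsto (fun n : ℕ => (n : ℂ) • (u n - b n)) atTop (nhds 0) := by
    have heq : (fun n : ℕ => (n : ℂ) • (u n - b n))
        = fun n : ℕ => (n : ℂ) • (u n - 1) - (n : ℂ) • (b n - 1) := by
      funext n
      rw [← smul_sub, sub_sub_sub_cancel_right]
    rw [heq]
    simpa using h.sub hbt
  have hε : Tendsto (fun n : ℕ => ‖(n : ℂ) • (u n - b n)‖) atTop (nhds 0) := by
    simpa using hw.norm
  set ε : ℕ → ℝ := fun n => ‖(n : ℂ) • (u n - b n)‖ with hεdef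
  have hub : ∀ᶠ n in atTop, ‖u n ^ n - exp x‖ ≤ Real.exp (‖x‖ + 1) * ε n := by
    have hev1 : ∀ᶠ n in atTop, ε n ≤ 1 :=
      hε.eventually (eventually_le_nhds one_pos)
    filter_upwards [hev1, eventually_ge_atTop 1] with n hεn1 hn1
    have hnR : (1:ℝ) ≤ (n:ℝ) := by exact_mod_cast hn1
    have hnpos : (0:ℝ) < n := lt_of_lt_of_le one_pos hnR
    have hεnn : (0:ℝ) ≤ ε n := norm_nonneg _
    have hεn : ‖u n - b n‖ = ε n / n := by
      have : ε n = (n : ℝ) * ‖u n - b n‖ := by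
        rw [hεdef]
        simp [norm_smul]
      rw [this]
      field_simp
    set K : ℝ := ‖x‖ + 1 with hK
    have hKpos : 0 < K := by positivity
    set M : ℝ := Real.exp (K / n) with hM
    have hbnorm : ‖b n‖ ≤ Real.exp (‖x‖ / n) := by
      refine le_trans (auxST_norm_exp h1 _) ?_
      apply Real.exp_le_exp.2
      rw [norm_smul, norm_inv]
      simp [div_eq_inv_mul]
    have hbM : ‖b n‖ ≤ M := by
      refine hbnorm.trans (Real.exp_le_exp.2 ?_)
      gcongr
      linarith
    have huM : ‖u n‖ ≤ M := by
      have h1' : ‖u n‖ ≤ ‖b n‖ + ‖u n - b n‖ := by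
        have hsum : b n + (u n - b n) = u n := by abel
        calc ‖u n‖ = ‖b n + (u n - b n)‖ := by rw [hsum]
        _ ≤ ‖b n‖ + ‖u n - b n‖ := norm_add_le _ _
      have h2' : ‖u n - b n‖ ≤ 1 / n := by
        rw [hεn]
        gcongr
      have h3' : Real.exp (‖x‖ / n) + 1 / n ≤ M := by
        rw [hM, hK, add_div, Real.exp_add]
        have e1 : (1:ℝ) ≤ Real.exp (‖x‖ / n) := Real.one_le_exp (by positivity)
        have e2 : 1 + 1 / (n:ℝ) ≤ Real.exp (1 / n) := by
          simpa [add_comm] using Real.add_one_le_exp (1 / (n:ℝ))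
        nlinarith [Real.exp_pos (‖x‖ / (n:ℝ)), one_div_pos.2 hnpos]
      linarith
    have hMpos : (0:ℝ) < M := Real.exp_pos _
    have hpow := auxST_pow_sub_pow (u n) (b n) M huM hbM n
    have hbnn : b n ^ n = exp x := by
      rw [hbdef]
      letI : NormedAlgebra ℚ B := NormedAlgebra.restrictScalars ℚ ℂ B
      rw [← exp_nsmul]
      congr 1
      rw [← Nat.cast_smul_eq_nsmul ℂ, smul_smul]
      rw [mul_inv_cancel₀, one_smul]
      exact Nat.cast_ne_zero.2 (by omega)
    have hMbound : M ^ (n - 1) ≤ Real.exp K := by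
      rw [hM, ← Real.exp_nat_mul]
      apply Real.exp_le_exp.2
      have hle : ((n - 1 : ℕ) : ℝ) ≤ (n : ℝ) := by
        exact_mod_cast Nat.sub_le n 1
      calc ((n - 1 : ℕ) : ℝ) * (K / n) ≤ (n : ℝ) * (K / n) := by
            apply mul_le_mul_of_nonneg_right hle (by positivity)
      _ = K := by field_simp
    calc ‖u n ^ n - exp x‖ = ‖u n ^ n - b n ^ n‖ := by rw [hbnn]
    _ ≤ n * M ^ (n - 1) * ‖u n - b n‖ := hpow
    _ = M ^ (n - 1) * ε n := by
        rw [hεn]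
        field_simp
    _ ≤ Real.exp K * ε n := by
        apply mul_le_mul_of_nonneg_right hMbound hεnn
  have hnorm0 : Tendsto (fun n : ℕ => ‖u n ^ n - exp x‖) atTop (nhds 0) := by
    have hb : Tendsto (fun n : ℕ => Real.exp (‖x‖ + 1) * ε n) atTop (nhds 0) := by
      simpa using hε.const_mul (Real.exp (‖x‖ + 1))
    exact squeeze_zero' (Eventually.of_forall fun n => norm_nonneg _) hub hb
  rw [← tendsto_sub_nhds_zero_iff]
  exact tendsto_zero_iff_norm_tendsto_zero.2 hnorm0



lemma auxST_prod_one (l : List B) :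
    (l.map (fun a => exp ((0 : ℂ) • a))).prod = 1 := by
  apply List.prod_eq_one
  intro b hb
  obtain ⟨a', -, rfl⟩ := List.mem_map.1 hb
  simp

lemma auxST_list_deriv (l : List B) :
    HasDerivAt (fun z : ℂ => (l.map (fun a => exp (z • a))).prod) l.sum 0 := by
  induction l with
  | nil => simpa using hasDerivAt_const (0 : ℂ) (1 : B)
  | cons a l ih =>
    have ha : HasDerivAt (fun z : ℂ => exp (z • a)) a 0 := by
      simpa using hasDerivAt_exp_smul_const (𝕂 := ℂ) a 0
    have hval : (l.map (fun a => exp ((0 : ℂ) • a))).prod = 1 := by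
      apply List.prod_eq_one
      intro b hb
      obtain ⟨a', -, rfl⟩ := List.mem_map.1 hb
      simp
    have := ha.mul ih
    simp only [List.map_cons, List.prod_cons, List.sum_cons]
    convert this using 1
    · rfl
    rw [hval]
    simp [mul_comm]

lemma auxST_main' {A : Type*} [NormedRing A] [NormedAlgebra ℂ A] [CompleteSpace A]
    {u : ℕ → A} {x : A}
    (h : Tendsto (fun n : ℕ => (n : ℂ) • (u n - 1)) atTop (nhds x)) :
    Tendsto (fun n : ℕ => u n ^ n) atTop (nhds (exp x)) := by
  rcases subsingleton_or_nontrivial A with hA | hA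
  · exact tendsto_const_nhds.congr fun n => (Subsingleton.elim _ _)
  · set ψ : A →+* (A →L[ℂ] A) :=
      { toFun := fun a => ContinuousLinearMap.mul ℂ A a
        map_one' := by ext c; simp
        map_mul' := fun a b => by ext c; simp [mul_assoc]
        map_zero' := by ext c; simp
        map_add' := fun a b => by ext c; simp [add_mul] } with hψdef
    have hψcont : Continuous ψ := (ContinuousLinearMap.mul ℂ A).continuous
    have h1 : ‖(1 : A →L[ℂ] A)‖ ≤ 1 := by
      rw [ContinuousLinearMap.one_def]
      exact ContinuousLinearMap.norm_id_le
    have hyp : Tendsto (fun n : ℕ => (n : ℂ) • ((fun n => ψ (u n)) n - 1)) atTop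
        (nhds (ψ x)) := by
      have : ∀ n : ℕ, (n : ℂ) • (ψ (u n) - 1) = ψ ((n : ℂ) • (u n - 1)) := by
        intro n
        rw [← map_one ψ, ← map_sub]
        ext c
        simp [hψdef]
      simp only [this]
      exact (hψcont.tendsto x).comp h
    have hmain := auxST_main h1 hyp
    have heval : Continuous (fun T : A →L[ℂ] A => T (1 : A)) :=
      (ContinuousLinearMap.apply ℂ A (1 : A)).continuous
    have hfin := (heval.tendsto (exp (ψ x))).comp hmain
    have hR : (exp (ψ x)) (1 : A) = exp x := by
      letI : NormedAlgebra ℚ A := NormedAlgebra.restrictScalars ℚ ℂ A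
      rw [← map_exp ψ hψcont x]
      simp [hψdef]
    rw [hR] at hfin
    refine hfin.congr fun n => ?_
    show (ψ (u n) ^ n) (1 : A) = u n ^ n
    rw [← map_pow]
    simp [hψdef]

lemma auxST_list_sum (m : ℕ) (L : ℕ → B) :
    (((List.range m).map fun j => L (j + 1)).sum) = ∑ j ∈ Finset.range m, L (j + 1) := by
  induction m with
  | zero => simp
  | succ m ih => rw [List.range_succ, Finset.sum_range_succ, ← ih]; simp

end aux




open NormedSpace

/-- The symmetrized (Strang-split) Lie–Trotter product formula in a complex unital Banach
algebra: `((∏_{j=1}^m exp((t/2n)Aⱼ))·(∏_{j=m}^{1} exp((t/2n)Aⱼ)))^n → exp(t·ΣAⱼ)`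
as `n → ∞`. -/
theorem strang_trotter_product_formula {A : Type*} [NormedRing A] [NormedAlgebra ℂ A]
    [CompleteSpace A] (m : ℕ) (L : ℕ → A) (t : ℝ) :
    Filter.Tendsto
      (fun n : ℕ =>
        ((((List.range m).map fun j =>
              exp (((t / (2 * (n : ℝ)) : ℝ) : ℂ) • L (j + 1))).prod) *
          (((List.range m).map fun j =>
              exp (((t / (2 * (n : ℝ)) : ℝ) : ℂ) • L (j + 1))).reverse.prod)) ^ n)
      Filter.atTop
      (nhds (exp (((t : ℝ) : ℂ) • ∑ j ∈ Finset.range m, L (j + 1)))) := by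
  set l : List A := (List.range m).map (fun j => L (j + 1)) with hl
  have hmapeq : ∀ c : ℂ, ((List.range m).map fun j => exp (c • L (j + 1)))
      = l.map (fun a => exp (c • a)) := by
    intro c
    rw [hl, List.map_map]
    rfl
  set g : ℂ → A := fun z => (l.map (fun a => exp (z • a))).prod *
      ((l.map (fun a => exp (z • a))).reverse).prod with hg
  have h2 : HasDerivAt (fun z : ℂ => ((l.map (fun a => exp (z • a))).reverse).prod) l.sum 0 := by
    have := auxST_list_deriv l.reverse
    simpa [List.map_reverse, List.sum_reverse] using this
  have hv1 : ((l.map (fun a => exp ((0 : ℂ) • a))).reverse).prod = 1 := by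
    rw [← List.map_reverse]
    exact auxST_prod_one _
  have hd : HasDerivAt g (l.sum + l.sum) 0 := by
    have hmul := (auxST_list_deriv l).mul h2
    simp only [hg]
    convert hmul using 1
    · rfl
    rw [hv1, auxST_prod_one, mul_one, one_mul]
  have hg0 : g 0 = 1 := by
    simp only [hg]
    rw [hv1, auxST_prod_one, mul_one]
  have hseq := auxST_deriv_seq hd ((t : ℂ) / 2)
  have hx : ((t : ℂ) / 2) • (l.sum + l.sum) = (t : ℂ) • l.sum := by
    rw [smul_add, ← add_smul]
    congr 1
    ring
  rw [hg0, hx] at hseq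
  have hmain := auxST_main' hseq
  have hcoef : ∀ n : ℕ, ((t / (2 * (n : ℝ)) : ℝ) : ℂ) = ((t : ℂ) / 2) / (n : ℂ) := by
    intro n
    push_cast
    rw [div_div]
  rw [← auxST_list_sum m L]
  refine hmain.congr fun n => ?_
  congr 1
  simp only [hg]
  rw [← hcoef n, hmapeq]
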